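/- Interpolation inequality for operators on a scale generated by a positive operator: let Λ be a Hermitian positive definite d×d complex matrix with all eigenvalues ≥ 1 (i.e. Λ ≥ I in the Loewner order), let T be any d×d complex matrix, let n₀ ≥ l ≥ 0 be real numbers and θ ∈ [0,1]. Then, with real powers of Λ defined by functional calculus, ‖Λ^{θ(n₀−l)/2} · T · Λ^{−(θ(n₀−l)+l)/2}‖ ≤ ‖T · Λ^{−l/2}‖^{1−θ} · ‖Λ^{(n₀−l)/2} · T · Λ^{−n₀/2}‖^{θ}. -/

import Mathlib

open Matrix
open scoped ComplexOrder

/-- The operator norm of a matrix induced by the Euclidean (ℓ²) norm on `ℂ^d`. -/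
noncomputable def opNorm {d : ℕ} (A : Matrix (Fin d) (Fin d) ℂ) : ℝ :=
  ‖Matrix.toEuclideanCLM (𝕜 := ℂ) A‖

/-- Real powers of a Hermitian matrix, defined by the functional calculus (diagonalization):
`Λ^s = U diag(λᵢ^s) Uᴴ` where `Λ = U diag(λᵢ) Uᴴ` is the spectral decomposition. -/
noncomputable def herPow {d : ℕ} (Λ : Matrix (Fin d) (Fin d) ℂ) (hΛ : Λ.IsHermitian)
    (s : ℝ) : Matrix (Fin d) (Fin d) ℂ :=
  (hΛ.eigenvectorUnitary : Matrix (Fin d) (Fin d) ℂ) *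
    Matrix.diagonal (fun i => ((hΛ.eigenvalues i ^ s : ℝ) : ℂ)) *
    (hΛ.eigenvectorUnitary : Matrix (Fin d) (Fin d) ℂ)ᴴ

section aux
variable {d : ℕ} {Λ : Matrix (Fin d) (Fin d) ℂ} {hΛ : Λ.IsHermitian}

lemma herPow_mul (hpd : Λ.PosDef) (s t : ℝ) :
    herPow Λ hΛ s * herPow Λ hΛ t = herPow Λ hΛ (s + t) := by
  have hV : (hΛ.eigenvectorUnitary : Matrix (Fin d) (Fin d) ℂ)ᴴ *
      (hΛ.eigenvectorUnitary : Matrix (Fin d) (Fin d) ℂ) = 1 := by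
    simpa [star_eq_conjTranspose] using (Unitary.star_mul_self_of_mem hΛ.eigenvectorUnitary.2)
  unfold herPow
  simp only [Matrix.mul_assoc]
  rw [← Matrix.mul_assoc ((hΛ.eigenvectorUnitary : Matrix (Fin d) (Fin d) ℂ)ᴴ), hV,
    Matrix.one_mul]
  simp only [← Matrix.mul_assoc, Matrix.diagonal_mul_diagonal]
  have he : (fun i => ((hΛ.eigenvalues i ^ s : ℝ) : ℂ) * ((hΛ.eigenvalues i ^ t : ℝ) : ℂ))
      = fun i => ((hΛ.eigenvalues i ^ (s + t) : ℝ) : ℂ) := by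
    funext i
    rw [← Complex.ofReal_mul, ← Real.rpow_add (hpd.eigenvalues_pos i)]
  rw [he]

lemma herPow_zero : herPow Λ hΛ 0 = 1 := by
  have hV : (hΛ.eigenvectorUnitary : Matrix (Fin d) (Fin d) ℂ) *
      (hΛ.eigenvectorUnitary : Matrix (Fin d) (Fin d) ℂ)ᴴ = 1 := by
    simpa [star_eq_conjTranspose] using (Unitary.mul_star_self_of_mem hΛ.eigenvectorUnitary.2)
  unfold herPow
  simp [Real.rpow_zero, Matrix.diagonal_one, hV]

end aux

section key
variable {d : ℕ}

set_option maxHeartbeats 2000000 in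
set_option synthInstance.maxHeartbeats 1000000 in
lemma key (hd : 1 ≤ d) {Λ : Matrix (Fin d) (Fin d) ℂ} (hΛ : Λ.IsHermitian)
    (hpd : Λ.PosDef) (B : Matrix (Fin d) (Fin d) ℂ) (a θ : ℝ) (hθ0 : 0 ≤ θ) (hθ1 : θ ≤ 1) :
    opNorm (herPow Λ hΛ (θ * a) * B * herPow Λ hΛ (-(θ * a)))
      ≤ opNorm B ^ (1 - θ) * opNorm (herPow Λ hΛ a * B * herPow Λ hΛ (-a)) ^ θ := by
  haveI : NeZero d := ⟨by omega⟩
  set φ := Matrix.toEuclideanCLM (𝕜 := ℂ) (n := Fin d) with hφ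
  set V : Matrix (Fin d) (Fin d) ℂ := (hΛ.eigenvectorUnitary : Matrix (Fin d) (Fin d) ℂ) with hVdef
  set μ : Fin d → ℝ := fun i => a * Real.log (hΛ.eigenvalues i) with hμ
  set D : ℂ → Matrix (Fin d) (Fin d) ℂ :=
    fun z => Matrix.diagonal (fun i => Complex.exp (z * (μ i : ℂ))) with hD
  set w := φ V with hw
  set b := φ B with hb
  set δ : ℂ → (EuclideanSpace ℂ (Fin d) →L[ℂ] EuclideanSpace ℂ (Fin d)) :=
    fun z => φ (D z) with hδ
  set F : ℂ → (EuclideanSpace ℂ (Fin d) →L[ℂ] EuclideanSpace ℂ (Fin d)) :=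
    fun z => w * δ z * star w * b * (w * δ (-z) * star w) with hF
  -- unitarity of w
  have hV1 : Vᴴ * V = 1 := by
    simpa [star_eq_conjTranspose] using (Unitary.star_mul_self_of_mem hΛ.eigenvectorUnitary.2)
  have hV2 : V * Vᴴ = 1 := by
    simpa [star_eq_conjTranspose] using (Unitary.mul_star_self_of_mem hΛ.eigenvectorUnitary.2)
  have hsw : star w = φ Vᴴ := by rw [hw, ← map_star φ, star_eq_conjTranspose]
  have hw1 : star w * w = 1 := by rw [hsw, hw, ← _root_.map_mul, hV1, _root_.map_one]
  have hw2 : w * star w = 1 := by rw [hsw, hw, ← _root_.map_mul, hV2, _root_.map_one]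
  -- δ facts
  have hδadd : ∀ z z' : ℂ, δ z * δ z' = δ (z + z') := by
    intro z z'
    rw [hδ]
    simp only
    rw [← _root_.map_mul]
    congr 1
    rw [hD]
    simp only [Matrix.diagonal_mul_diagonal]
    have : (fun i => Complex.exp (z * (μ i : ℂ)) * Complex.exp (z' * (μ i : ℂ)))
        = fun i => Complex.exp ((z + z') * (μ i : ℂ)) := by
      funext i
      rw [← Complex.exp_add, ← add_mul]
    rw [this]
  have hδ0 : δ 0 = 1 := by
    rw [hδ]
    simp only
    rw [show D 0 = 1 by rw [hD]; simp, _root_.map_one]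
  have hδstar : ∀ z : ℂ, star (δ z) = δ (starRingEnd ℂ z) := by
    intro z
    rw [hδ]
    simp only
    rw [← map_star]
    congr 1
    rw [hD, star_eq_conjTranspose, Matrix.diagonal_conjTranspose]
    have : (star fun i => Complex.exp (z * (μ i : ℂ)))
        = fun i => Complex.exp (starRingEnd ℂ z * (μ i : ℂ)) := by
      funext i
      simp only [Pi.star_apply, RCLike.star_def, ← Complex.exp_conj, _root_.map_mul,
        Complex.conj_ofReal]
    rw [this]
  -- sandwich
  have cancel : ∀ t, star w * (w * t) = t := fun t => by rw [← mul_assoc, hw1, one_mul]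
  have hS : ∀ x y, (w * x * star w) * (w * y * star w) = w * (x * y) * star w := by
    intro x y
    simp only [mul_assoc, cancel]
  -- herPow link
  have hlink : ∀ t : ℝ, w * δ (t : ℂ) * star w = φ (herPow Λ hΛ (t * a)) := by
    intro t
    rw [hw, hsw, ← _root_.map_mul, ← _root_.map_mul]
    congr 1
    unfold herPow
    rw [← hVdef, hD]
    have : (fun i => Complex.exp ((t : ℂ) * (μ i : ℂ)))
        = fun i => ((hΛ.eigenvalues i ^ (t * a) : ℝ) : ℂ) := by
      funext i
      rw [Real.rpow_def_of_pos (hpd.eigenvalues_pos i), hμ]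
      rw [show ((t : ℂ) * ((a * Real.log (hΛ.eigenvalues i) : ℝ) : ℂ))
          = ((t * (a * Real.log (hΛ.eigenvalues i)) : ℝ) : ℂ) by push_cast; ring]
      rw [← Complex.ofReal_exp]
      congr 1
      ring
    beta_reduce
    rw [this]
  -- sum representation of δ
  have hDsum : ∀ z : ℂ, D z = ∑ i, Complex.exp (z * (μ i : ℂ)) • Matrix.single i i (1:ℂ) := by
    intro z
    rw [hD]
    ext i j
    simp only [Matrix.sum_apply, Matrix.smul_apply, Matrix.single, Matrix.of_apply,
      smul_eq_mul, mul_ite, mul_one, mul_zero]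
    by_cases h : i = j
    · subst h; simp [Matrix.diagonal_apply]
    · simp [Matrix.diagonal_apply, h, Finset.sum_ite_of_false]
  have hδsum : ∀ z : ℂ, δ z = ∑ i, Complex.exp (z * (μ i : ℂ)) • φ (Matrix.single i i (1:ℂ)) := by
    intro z
    rw [hδ]
    beta_reduce
    rw [hDsum z, map_sum]
    simp only [_root_.map_smul]
  have hδdiff : Differentiable ℂ δ := by
    have : δ = fun z => ∑ i, Complex.exp (z * (μ i : ℂ)) • φ (Matrix.single i i (1:ℂ)) :=
      funext hδsum
    rw [this]
    apply Differentiable.fun_sum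
    intro i _
    exact ((differentiable_id.mul_const _).cexp).smul_const _
  have hFdiff : Differentiable ℂ F := by
    rw [hF]
    exact ((((differentiable_const w).mul hδdiff).mul_const (star w)).mul_const b).mul
      ((((differentiable_const w).mul (hδdiff.comp differentiable_neg)).mul_const (star w)))
  -- norm one
  haveI : Nontrivial (EuclideanSpace ℂ (Fin d)) := inferInstance
  -- unitary sandwich facts
  have hustar : ∀ z : ℂ, z.re = 0 → star (w * δ z * star w) = w * δ (-z) * star w := by
    intro z hz
    have hconj : starRingEnd ℂ z = -z := by
      apply Complex.ext <;> simp [hz]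
    simp only [StarMul.star_mul, star_star]
    rw [hδstar, hconj, mul_assoc]
  have hu : ∀ z : ℂ, z.re = 0 → ‖w * δ z * star w‖ = 1 := by
    intro z hz
    have hmul : star (w * δ z * star w) * (w * δ z * star w) = 1 := by
      rw [hustar z hz, hS, hδadd]
      simp only [neg_add_cancel, hδ0, mul_one, hw2]
    have h2 : ‖w * δ z * star w‖ * ‖w * δ z * star w‖ = 1 := by
      rw [← CStarRing.norm_star_mul_self, hmul, norm_one]
    nlinarith [norm_nonneg (w * δ z * star w)]
  have nstar : ∀ x : EuclideanSpace ℂ (Fin d) →L[ℂ] EuclideanSpace ℂ (Fin d),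
      ‖star x‖ = ‖x‖ := by
    intro x
    have h1 := CStarRing.norm_star_mul_self (x := star x)
    rw [star_star] at h1
    have h2 := CStarRing.norm_self_mul_star (x := x)
    nlinarith [norm_nonneg x, norm_nonneg (star x)]
  have nm3 : ∀ x : EuclideanSpace ℂ (Fin d) →L[ℂ] EuclideanSpace ℂ (Fin d),
      ‖w * x * star w‖ ≤ ‖w‖ * ‖x‖ * ‖w‖ := by
    intro x
    calc ‖w * x * star w‖ ≤ ‖w * x‖ * ‖star w‖ := norm_mul_le _ _
      _ ≤ ‖w‖ * ‖x‖ * ‖star w‖ := mul_le_mul_of_nonneg_right (norm_mul_le _ _) (norm_nonneg _)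
      _ = ‖w‖ * ‖x‖ * ‖w‖ := by rw [nstar]
  -- edge bounds
  have edge0 : ∀ z : ℂ, z.re = 0 → ‖F z‖ ≤ ‖b‖ := by
    intro z hz
    have hFz : F z = (w * δ z * star w) * b * star (w * δ z * star w) := by
      rw [hustar z hz, hF]
    calc ‖F z‖ = ‖(w * δ z * star w) * b * star (w * δ z * star w)‖ := by rw [hFz]
      _ ≤ ‖(w * δ z * star w) * b‖ * ‖star (w * δ z * star w)‖ := norm_mul_le _ _
      _ ≤ ‖w * δ z * star w‖ * ‖b‖ * ‖star (w * δ z * star w)‖ :=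
          mul_le_mul_of_nonneg_right (norm_mul_le _ _) (norm_nonneg _)
      _ = ‖b‖ := by rw [nstar, hu z hz]; ring
  have edge1 : ∀ z : ℂ, z.re = 1 → ‖F z‖ ≤ ‖F 1‖ := by
    intro z hz
    have hre : (z - 1).re = 0 := by simp [hz]
    set u := w * δ (z - 1) * star w with hudef
    have e1 : u * (w * δ 1 * star w) = w * δ z * star w := by
      rw [hudef, hS, hδadd]
      norm_num
    have e2 : (w * δ (-1) * star w) * (w * δ (-(z-1)) * star w) = w * δ (-z) * star w := by
      rw [hS, hδadd]
      have : (-1 : ℂ) + -(z - 1) = -z := by ring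
      rw [this]
    have hFz : F z = u * F 1 * star u := by
      rw [hustar _ hre]
      have : u * F 1 * (w * δ (-(z-1)) * star w)
          = (u * (w * δ 1 * star w)) * b * ((w * δ (-1) * star w) * (w * δ (-(z-1)) * star w)) := by
        rw [hF]
        simp only [mul_assoc]
      rw [this, e1, e2, hF]
    calc ‖F z‖ = ‖u * F 1 * star u‖ := by rw [hFz]
      _ ≤ ‖u * F 1‖ * ‖star u‖ := norm_mul_le _ _
      _ ≤ ‖u‖ * ‖F 1‖ * ‖star u‖ := mul_le_mul_of_nonneg_right (norm_mul_le _ _) (norm_nonneg _)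
      _ = ‖F 1‖ := by rw [nstar, hu _ hre]; ring
  -- boundedness on the strip
  set Cδ := ∑ i, Real.exp |μ i| * ‖φ (Matrix.single i i (1:ℂ))‖ with hCδdef
  have hCδ0 : 0 ≤ Cδ :=
    Finset.sum_nonneg fun i _ => mul_nonneg (Real.exp_pos _).le (norm_nonneg _)
  have hCδ : ∀ z : ℂ, |z.re| ≤ 1 → ‖δ z‖ ≤ Cδ := by
    intro z hz
    rw [hδsum z, hCδdef]
    refine le_trans (norm_sum_le _ _) (Finset.sum_le_sum fun i _ => ?_)
    rw [norm_smul (Complex.exp (z * (μ i : ℂ))) (φ (Matrix.single i i (1:ℂ)))]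
    refine mul_le_mul_of_nonneg_right ?_ (norm_nonneg _)
    rw [Complex.norm_exp]
    apply Real.exp_le_exp.mpr
    have : (z * (μ i : ℂ)).re = z.re * μ i := by
      simp [Complex.mul_re]
    rw [this]
    calc z.re * μ i ≤ |z.re * μ i| := le_abs_self _
      _ = |z.re| * |μ i| := abs_mul _ _
      _ ≤ 1 * |μ i| := mul_le_mul_of_nonneg_right hz (abs_nonneg _)
      _ = |μ i| := one_mul _
  have hbdd : BddAbove ((norm ∘ F) '' (Complex.HadamardThreeLines.verticalClosedStrip 0 1)) := by
    refine ⟨(‖w‖ * Cδ * ‖w‖ * ‖b‖) * (‖w‖ * Cδ * ‖w‖), ?_⟩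
    rintro r ⟨z, hz, rfl⟩
    simp only [Function.comp_apply]
    have hz' : z.re ∈ Set.Icc (0:ℝ) 1 := hz
    have hz1 : |z.re| ≤ 1 := by rw [abs_le]; exact ⟨by linarith [hz'.1], hz'.2⟩
    have hz2 : |(-z).re| ≤ 1 := by rw [Complex.neg_re, abs_neg]; exact hz1
    have A1 : ‖w * δ z * star w * b‖ ≤ ‖w‖ * Cδ * ‖w‖ * ‖b‖ := by
      refine le_trans (norm_mul_le _ _) (mul_le_mul_of_nonneg_right ?_ (norm_nonneg _))
      refine le_trans (nm3 _) ?_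
      gcongr
      exact hCδ z hz1
    have A2 : ‖w * δ (-z) * star w‖ ≤ ‖w‖ * Cδ * ‖w‖ := by
      refine le_trans (nm3 _) ?_
      gcongr
      exact hCδ (-z) hz2
    rw [hF]
    beta_reduce
    refine le_trans (norm_mul_le _ _) (mul_le_mul A1 A2 (norm_nonneg _) ?_)
    have : (0:ℝ) ≤ ‖w‖ * Cδ * ‖w‖ :=
      mul_nonneg (mul_nonneg (norm_nonneg _) hCδ0) (norm_nonneg _)
    exact mul_nonneg this (norm_nonneg _)
  -- apply Hadamard three lines
  have hθmem : (θ : ℂ) ∈ Complex.HadamardThreeLines.verticalClosedStrip 0 1 := by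
    simp only [Complex.HadamardThreeLines.verticalClosedStrip, Set.mem_preimage,
      Complex.ofReal_re, Set.mem_Icc]
    exact ⟨hθ0, hθ1⟩
  have main := Complex.HadamardThreeLines.norm_le_interp_of_mem_verticalClosedStrip₀₁' F hθmem
    hFdiff.diffContOnCl hbdd
    (fun z hz => edge0 z (Set.mem_preimage.mp hz))
    (fun z hz => edge1 z (Set.mem_preimage.mp hz))
  -- identify the endpoints
  have hFθ : F (θ:ℂ) = φ (herPow Λ hΛ (θ * a) * B * herPow Λ hΛ (-(θ * a))) := by
    have l1 := hlink θ
    have l2 := hlink (-θ)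
    rw [show ((-θ : ℝ) : ℂ) = -(θ:ℂ) by push_cast; ring] at l2
    rw [show (-θ) * a = -(θ * a) by ring] at l2
    rw [hF]
    beta_reduce
    rw [l1, l2, hb, ← _root_.map_mul, ← _root_.map_mul]
  have hF1 : F 1 = φ (herPow Λ hΛ a * B * herPow Λ hΛ (-a)) := by
    have l1 := hlink 1
    have l2 := hlink (-1)
    rw [show ((1 : ℝ) : ℂ) = 1 by norm_num] at l1
    rw [show ((-1 : ℝ) : ℂ) = -1 by norm_num] at l2
    rw [show (1:ℝ) * a = a by ring] at l1
    rw [show (-1:ℝ) * a = -a by ring] at l2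
    rw [hF]
    beta_reduce
    rw [l1, l2, hb, ← _root_.map_mul, ← _root_.map_mul]
  have goal1 : opNorm (herPow Λ hΛ (θ * a) * B * herPow Λ hΛ (-(θ * a))) = ‖F (θ:ℂ)‖ := by
    rw [hFθ]; rfl
  have goal2 : opNorm B = ‖b‖ := rfl
  have goal3 : opNorm (herPow Λ hΛ a * B * herPow Λ hΛ (-a)) = ‖F 1‖ := by
    rw [hF1]; rfl
  rw [goal1, goal2, goal3]
  simpa using main

end key

set_option maxHeartbeats 2000000 in
/-- Interpolation inequality for operators on a scale generated by a positive operator `Λ ≥ I`: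
`‖Λ^{θ(n₀−l)/2} T Λ^{−(θ(n₀−l)+l)/2}‖ ≤ ‖T Λ^{−l/2}‖^{1−θ} ‖Λ^{(n₀−l)/2} T Λ^{−n₀/2}‖^{θ}`. -/
theorem stmt17 {d : ℕ} (hd : 1 ≤ d)
    (Λ : Matrix (Fin d) (Fin d) ℂ) (hΛ : Λ.IsHermitian) (hpd : Λ.PosDef)
    (hge : (Λ - 1).PosSemidef)
    (T : Matrix (Fin d) (Fin d) ℂ) (n₀ l : ℝ) (hl : 0 ≤ l) (hn : l ≤ n₀)
    (θ : ℝ) (hθ0 : 0 ≤ θ) (hθ1 : θ ≤ 1) :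
    opNorm (herPow Λ hΛ (θ * (n₀ - l) / 2) * T * herPow Λ hΛ (-((θ * (n₀ - l) + l) / 2)))
      ≤ opNorm (T * herPow Λ hΛ (-(l / 2))) ^ (1 - θ) *
        opNorm (herPow Λ hΛ ((n₀ - l) / 2) * T * herPow Λ hΛ (-(n₀ / 2))) ^ θ := by
  set a : ℝ := (n₀ - l) / 2 with ha
  set B : Matrix (Fin d) (Fin d) ℂ := T * herPow Λ hΛ (-(l / 2)) with hB
  have h1 : θ * (n₀ - l) / 2 = θ * a := by rw [ha]; ring
  have h2 : herPow Λ hΛ (-((θ * (n₀ - l) + l) / 2))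
      = herPow Λ hΛ (-(l / 2)) * herPow Λ hΛ (-(θ * a)) := by
    rw [herPow_mul hpd]
    congr 1
    rw [ha]; ring
  have h3 : herPow Λ hΛ (-(n₀ / 2)) = herPow Λ hΛ (-(l / 2)) * herPow Λ hΛ (-a) := by
    rw [herPow_mul hpd]
    congr 1
    rw [ha]; ring
  rw [h1, h2, h3]
  have e1 : herPow Λ hΛ (θ * a) * T * (herPow Λ hΛ (-(l / 2)) * herPow Λ hΛ (-(θ * a)))
      = herPow Λ hΛ (θ * a) * B * herPow Λ hΛ (-(θ * a)) := by
    rw [hB]; simp only [Matrix.mul_assoc]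
  have e2 : herPow Λ hΛ a * T * (herPow Λ hΛ (-(l / 2)) * herPow Λ hΛ (-a))
      = herPow Λ hΛ a * B * herPow Λ hΛ (-a) := by
    rw [hB]; simp only [Matrix.mul_assoc]
  rw [e1, e2]
  exact key hd hΛ hpd B a θ hθ0 hθ1
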